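/- For every n ∈ ℕ with n ≥ 1, every (a_j)_{1≤j≤n} ∈ ℂ^n and every (γ_{j,k})_{1≤j<k≤n} ∈ ℝ^{n(n−1)/2}: inf over v ∈ ℂ^{2^n} with ‖v‖ = 1 of ‖M_n((a_j)_{1≤j≤n},(γ_{j,k})_{1≤j<k≤n})·v‖² is at least Σ_{j=1}^{n}|a_j|² − [n ≥ 2]·Σ_{m=2}^{n} |a_m|·Σ_{j=1}^{m−1} |1 + e^{iγ_{j,m}}|·|a_j|, where [n ≥ 2] is 1 if n ≥ 2 and 0 otherwise. -/

import Mathlib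

open Matrix

noncomputable def Umat : (n : ℕ) → (Fin n → ℝ) → Matrix (Fin (2 ^ n)) (Fin (2 ^ n)) ℂ
  | 0, _ => 1
  | n + 1, ξ =>
      (Matrix.reindex (finSumFinEquiv.trans (finCongr (by rw [pow_succ, mul_two])))
        (finSumFinEquiv.trans (finCongr (by rw [pow_succ, mul_two]))))
        (Matrix.fromBlocks (Umat n fun j => ξ j.castSucc) 0 0
          (Complex.exp (Complex.I * (ξ (Fin.last n) : ℂ)) • Umat n fun j => ξ j.castSucc))

/-- The recursively defined hopping matrix `M_n((a_j), (γ_{j,k}))`; only the entries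
`γ j k` with `j < k` are relevant. -/
noncomputable def Mmat : (n : ℕ) → (Fin n → ℂ) → (Fin n → Fin n → ℝ) →
    Matrix (Fin (2 ^ n)) (Fin (2 ^ n)) ℂ
  | 0, _, _ => 0
  | n + 1, a, γ =>
      (Matrix.reindex (finSumFinEquiv.trans (finCongr (by rw [pow_succ, mul_two])))
        (finSumFinEquiv.trans (finCongr (by rw [pow_succ, mul_two]))))
        (Matrix.fromBlocks
          (Mmat n (fun j => a j.castSucc) fun j k => γ j.castSucc k.castSucc)
          (a (Fin.last n) • Umat n fun j => γ j.castSucc (Fin.last n))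
          ((starRingEnd ℂ) (a (Fin.last n)) • (Umat n fun j => γ j.castSucc (Fin.last n))ᴴ)
          (Mmat n (fun j => a j.castSucc) fun j k => γ j.castSucc k.castSucc))

namespace MmatProof

def be (n : ℕ) : Fin (2 ^ n) ⊕ Fin (2 ^ n) ≃ Fin (2 ^ (n + 1)) :=
  finSumFinEquiv.trans (finCongr (by rw [pow_succ, mul_two]))

noncomputable def pL {n : ℕ} (v : EuclideanSpace ℂ (Fin (2 ^ (n + 1)))) :
    EuclideanSpace ℂ (Fin (2 ^ n)) := WithLp.toLp 2 (fun i => v (be n (Sum.inl i)))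

noncomputable def pR {n : ℕ} (v : EuclideanSpace ℂ (Fin (2 ^ (n + 1)))) :
    EuclideanSpace ℂ (Fin (2 ^ n)) := WithLp.toLp 2 (fun i => v (be n (Sum.inr i)))

noncomputable def jn {n : ℕ} (x y : EuclideanSpace ℂ (Fin (2 ^ n))) :
    EuclideanSpace ℂ (Fin (2 ^ (n + 1))) := WithLp.toLp 2 (fun i => Sum.elim x y ((be n).symm i))

lemma Umat_succ (n : ℕ) (ξ : Fin (n + 1) → ℝ) :
    Umat (n + 1) ξ = (Matrix.reindex (be n) (be n))
      (Matrix.fromBlocks (Umat n fun j => ξ j.castSucc) 0 0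
        (Complex.exp (Complex.I * (ξ (Fin.last n) : ℂ)) • Umat n fun j => ξ j.castSucc)) := rfl

lemma Mmat_succ (n : ℕ) (a : Fin (n + 1) → ℂ) (γ : Fin (n + 1) → Fin (n + 1) → ℝ) :
    Mmat (n + 1) a γ = (Matrix.reindex (be n) (be n))
      (Matrix.fromBlocks
        (Mmat n (fun j => a j.castSucc) fun j k => γ j.castSucc k.castSucc)
        (a (Fin.last n) • Umat n fun j => γ j.castSucc (Fin.last n))
        ((starRingEnd ℂ) (a (Fin.last n)) • (Umat n fun j => γ j.castSucc (Fin.last n))ᴴ)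
        (Mmat n (fun j => a j.castSucc) fun j k => γ j.castSucc k.castSucc)) := rfl
lemma norm_sq_eq' {m : ℕ} (x : EuclideanSpace ℂ (Fin m)) : ‖x‖ ^ 2 = ∑ i, ‖x i‖ ^ 2 := by
  rw [EuclideanSpace.norm_eq, Real.sq_sqrt]
  positivity

lemma pL_jn {n : ℕ} (x y : EuclideanSpace ℂ (Fin (2 ^ n))) : pL (jn x y) = x := by
  ext i; simp [pL, jn]

lemma pR_jn {n : ℕ} (x y : EuclideanSpace ℂ (Fin (2 ^ n))) : pR (jn x y) = y := by
  ext i; simp [pR, jn]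

lemma jn_apply_inl {n : ℕ} (x y : EuclideanSpace ℂ (Fin (2 ^ n))) (i : Fin (2 ^ n)) :
    jn x y (be n (Sum.inl i)) = x i := by simp [jn]

lemma jn_add {n : ℕ} (x y x' y' : EuclideanSpace ℂ (Fin (2 ^ n))) :
    jn x y + jn x' y' = jn (x + x') (y + y') := by
  ext i
  rcases h : (be n).symm i with s | s <;>
    simp [jn, h, PiLp.add_apply]

lemma norm_jn_sq {n : ℕ} (x y : EuclideanSpace ℂ (Fin (2 ^ n))) :
    ‖jn x y‖ ^ 2 = ‖x‖ ^ 2 + ‖y‖ ^ 2 := by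
  rw [norm_sq_eq', norm_sq_eq', norm_sq_eq']
  rw [← Equiv.sum_comp (be n) (fun i => ‖jn x y i‖ ^ 2), Fintype.sum_sum_type]
  simp [jn]

lemma norm_sq_split {n : ℕ} (v : EuclideanSpace ℂ (Fin (2 ^ (n + 1)))) :
    ‖v‖ ^ 2 = ‖pL v‖ ^ 2 + ‖pR v‖ ^ 2 := by
  have : v = jn (pL v) (pR v) := by
    ext i
    rcases h : (be n).symm i with s | s <;>
      · simp only [jn, h, Sum.elim_inl, Sum.elim_inr, pL, pR]
        rw [← h, Equiv.apply_symm_apply]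
  conv_lhs => rw [this]
  exact norm_jn_sq _ _

lemma toEuclideanLin_block {n : ℕ} (A B C D : Matrix (Fin (2 ^ n)) (Fin (2 ^ n)) ℂ)
    (v : EuclideanSpace ℂ (Fin (2 ^ (n + 1)))) :
    Matrix.toEuclideanLin ((Matrix.reindex (be n) (be n)) (Matrix.fromBlocks A B C D)) v =
      jn (Matrix.toEuclideanLin A (pL v) + Matrix.toEuclideanLin B (pR v))
         (Matrix.toEuclideanLin C (pL v) + Matrix.toEuclideanLin D (pR v)) := by
  ext i
  have h1 : v.ofLp ∘ ⇑(be n) =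
      Sum.elim (pL v) (pR v) := by
    funext s; rcases s with s | s <;> rfl
  simp only [Matrix.toEuclideanLin_apply, Matrix.reindex_apply]
  rw [Matrix.submatrix_mulVec_equiv, Equiv.symm_symm, h1, Matrix.fromBlocks_mulVec]
  show Sum.elim (A *ᵥ (pL v ⊕ᵥ pR v) ∘ Sum.inl + B *ᵥ (pL v ⊕ᵥ pR v) ∘ Sum.inr)
      (C *ᵥ (pL v ⊕ᵥ pR v) ∘ Sum.inl + D *ᵥ (pL v ⊕ᵥ pR v) ∘ Sum.inr) ((be n).symm i)
    = Sum.elim _ _ ((be n).symm i)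
  rcases (be n).symm i with s | s <;> rfl
lemma toEuclideanLin_diagonal_apply {m : ℕ} (d : Fin m → ℂ) (z : EuclideanSpace ℂ (Fin m))
    (i : Fin m) : Matrix.toEuclideanLin (Matrix.diagonal d) z i = d i * z i := by
  simp [Matrix.toEuclideanLin_apply, Matrix.mulVec_diagonal]

lemma norm_toEuclideanLin_diagonal {m : ℕ} (d : Fin m → ℂ) (hd : ∀ i, ‖d i‖ = 1)
    (z : EuclideanSpace ℂ (Fin m)) :
    ‖Matrix.toEuclideanLin (Matrix.diagonal d) z‖ = ‖z‖ := by
  have h2 : ∀ x : EuclideanSpace ℂ (Fin m), ‖x‖ = Real.sqrt (∑ i, ‖x i‖ ^ 2) :=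
    fun x => EuclideanSpace.norm_eq x
  rw [h2, h2]
  congr 1
  refine Finset.sum_congr rfl fun i _ => ?_
  rw [toEuclideanLin_diagonal_apply, norm_mul]
  have : ‖d i‖ = 1 := by exact hd i
  rw [this, one_mul]

lemma toEuclideanLin_diagonal_comp {m : ℕ} (d₁ d₂ : Fin m → ℂ) (z : EuclideanSpace ℂ (Fin m)) :
    Matrix.toEuclideanLin (Matrix.diagonal d₁) (Matrix.toEuclideanLin (Matrix.diagonal d₂) z) =
      Matrix.toEuclideanLin (Matrix.diagonal (d₁ * d₂)) z := by
  ext i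
  rw [toEuclideanLin_diagonal_apply, toEuclideanLin_diagonal_apply, toEuclideanLin_diagonal_apply]
  simp [mul_assoc]

lemma abs_exp_I_mul_real (t : ℝ) : ‖Complex.exp (Complex.I * (t : ℂ))‖ = 1 := by
  rw [Complex.norm_exp]
  simp [Complex.mul_re]

lemma Umat_diag (n : ℕ) (ξ : Fin n → ℝ) :
    ∃ d : Fin (2 ^ n) → ℂ, (∀ i, ‖d i‖ = 1) ∧ Umat n ξ = Matrix.diagonal d := by
  induction n with
  | zero =>
      exact ⟨fun _ => 1, fun i => by simp, by simp [Umat, Matrix.diagonal_one]⟩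
  | succ n ih =>
      obtain ⟨d, hd, hUd⟩ := ih fun j => ξ j.castSucc
      set ε := Complex.exp (Complex.I * (ξ (Fin.last n) : ℂ)) with hε
      refine ⟨(Sum.elim d (ε • d)) ∘ (be n).symm, fun i => ?_, ?_⟩
      · rcases h : (be n).symm i with s | s <;>
          simp [h, hd, norm_mul, abs_exp_I_mul_real, hε]
      · rw [Umat_succ, hUd, ← Matrix.diagonal_smul, Matrix.fromBlocks_diagonal]
        ext i j
        by_cases hij : i = j
        · subst hij
          simp [Matrix.reindex_apply, Matrix.submatrix_apply, Matrix.diagonal_apply_eq]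
          rfl
        · have : (be n).symm i ≠ (be n).symm j := fun h => hij (by simpa using congrArg (be n) h)
          simp [Matrix.reindex_apply, Matrix.submatrix_apply, Matrix.diagonal_apply_ne _ this,
            Matrix.diagonal_apply_ne _ hij]

lemma Mmat_herm (n : ℕ) (a : Fin n → ℂ) (γ : Fin n → Fin n → ℝ) :
    (Mmat n a γ).IsHermitian := by
  induction n with
  | zero => simp [Mmat, Matrix.IsHermitian]
  | succ n ih =>
      rw [Mmat_succ]
      show _ᴴ = _
      rw [Matrix.reindex_apply, Matrix.conjTranspose_submatrix, Matrix.fromBlocks_conjTranspose]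
      congr 1
      rw [ih]
      rw [Matrix.conjTranspose_smul, Matrix.conjTranspose_conjTranspose]
      rw [Matrix.conjTranspose_smul]
      congr 2 <;> simp [ih]
noncomputable def Kb (n : ℕ) (a : Fin n → ℂ) (ξ : Fin n → ℝ) : ℝ :=
  ∑ j, ‖1 + Complex.exp (Complex.I * (ξ j : ℂ))‖ * ‖a j‖

lemma Kb_nonneg (n : ℕ) (a : Fin n → ℂ) (ξ : Fin n → ℝ) : 0 ≤ Kb n a ξ := by
  apply Finset.sum_nonneg
  intro j _
  positivity

lemma norm_smul_diag {m : ℕ} (c : ℂ) (d : Fin m → ℂ) (hd : ∀ i, ‖d i‖ = 1)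
    (z : EuclideanSpace ℂ (Fin m)) :
    ‖c • Matrix.toEuclideanLin (Matrix.diagonal d) z‖ = ‖c‖ * ‖z‖ := by
  rw [norm_smul, norm_toEuclideanLin_diagonal d hd]

lemma arith_aux (K r nx ny nw n1 n2 g : ℝ) (hK : 0 ≤ K) (hr : 0 ≤ r)
    (hg0 : 0 ≤ g) (h1' : 0 ≤ n1) (h2' : 0 ≤ n2) (hx : 0 ≤ nx) (hy : 0 ≤ ny) (hw : 0 ≤ nw)
    (hwsq : nw ^ 2 = nx ^ 2 + ny ^ 2) (h1 : n1 ≤ K * nx + r * ny) (h2 : n2 ≤ r * nx + K * ny)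
    (hg : g ^ 2 = n1 ^ 2 + n2 ^ 2) : g ≤ (K + r) * nw := by
  have hc : 0 ≤ (K + r) * nw := by positivity
  have hsq : g ^ 2 ≤ ((K + r) * nw) ^ 2 := by
    have hnw2 : ((K + r) * nw) ^ 2 = (K + r) ^ 2 * (nx ^ 2 + ny ^ 2) := by
      rw [mul_pow, hwsq]
    rw [hnw2]
    nlinarith [mul_nonneg (mul_nonneg hK hr) (sq_nonneg (nx - ny)),
      mul_le_mul h1 h1 h1' (by positivity), mul_le_mul h2 h2 h2' (by positivity)]
  nlinarith [sq_nonneg (g - (K + r) * nw), sq_nonneg (g + (K + r) * nw)]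

lemma anticomm_bound (n : ℕ) (a : Fin n → ℂ) (γ : Fin n → Fin n → ℝ) (ξ : Fin n → ℝ)
    (w : EuclideanSpace ℂ (Fin (2 ^ n))) :
    ‖Matrix.toEuclideanLin (Mmat n a γ) (Matrix.toEuclideanLin (Umat n ξ) w) +
      Matrix.toEuclideanLin (Umat n ξ) (Matrix.toEuclideanLin (Mmat n a γ) w)‖ ≤
      Kb n a ξ * ‖w‖ := by
  induction n with
  | zero =>
      simp [Mmat, Kb]
  | succ n ih =>
      set a' : Fin n → ℂ := fun j => a j.castSucc with ha'
      set γ' : Fin n → Fin n → ℝ := fun j k => γ j.castSucc k.castSucc with hγ'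
      set ξ' : Fin n → ℝ := fun j => ξ j.castSucc with hξ'
      set ζ : Fin n → ℝ := fun j => γ j.castSucc (Fin.last n) with hζ
      set aL : ℂ := a (Fin.last n) with haL
      set ε : ℂ := Complex.exp (Complex.I * (ξ (Fin.last n) : ℂ)) with hε
      obtain ⟨du, hdu, hU⟩ := Umat_diag n ξ'
      obtain ⟨dv, hdv, hV⟩ := Umat_diag n ζ
      set x := pL w with hx
      set y := pR w with hy
      set M' := Mmat n a' γ' with hM'
      set L := fun (A : Matrix (Fin (2 ^ n)) (Fin (2 ^ n)) ℂ) => Matrix.toEuclideanLin A with hL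
      -- block decomposition of both applications
      have hMv : ∀ v : EuclideanSpace ℂ (Fin (2 ^ (n + 1))),
          Matrix.toEuclideanLin (Mmat (n + 1) a γ) v =
            jn (L M' (pL v) + aL • L (Umat n ζ) (pR v))
               ((starRingEnd ℂ) aL • L (Umat n ζ)ᴴ (pL v) + L M' (pR v)) := by
        intro v
        rw [Mmat_succ, toEuclideanLin_block]
        simp only [_root_.map_smul]
        rfl
      have hUv : ∀ v : EuclideanSpace ℂ (Fin (2 ^ (n + 1))),
          Matrix.toEuclideanLin (Umat (n + 1) ξ) v =
            jn (L (Umat n ξ') (pL v)) (ε • L (Umat n ξ') (pR v)) := by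
        intro v
        rw [Umat_succ, toEuclideanLin_block]
        simp only [map_zero, LinearMap.zero_apply, add_zero, zero_add, _root_.map_smul]
        rfl
      rw [hUv w, hMv (jn _ _), hMv w, hUv (jn _ _), pL_jn, pR_jn, pL_jn, pR_jn, jn_add]
      -- identify the two components
      have hVH : (Umat n ζ)ᴴ = Matrix.diagonal (star dv) := by
        rw [hV, Matrix.diagonal_conjTranspose]
      set T := fun z : EuclideanSpace ℂ (Fin (2 ^ n)) => L M' (L (Umat n ξ') z) +
        L (Umat n ξ') (L M' z) with hT
      have hG1 : L M' (L (Umat n ξ') x) + aL • L (Umat n ζ) (ε • L (Umat n ξ') y) +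
          L (Umat n ξ') (L M' x + aL • L (Umat n ζ) y) =
          T x + (aL * (1 + ε)) • L (Matrix.diagonal (du * dv)) y := by
        simp only [hL, hU, hV, map_add, _root_.map_smul, toEuclideanLin_diagonal_comp, hT]
        rw [mul_comm dv du]
        module
      have hG2 : (starRingEnd ℂ) aL • L (Umat n ζ)ᴴ (L (Umat n ξ') x) +
          L M' (ε • L (Umat n ξ') y) +
          ε • L (Umat n ξ') ((starRingEnd ℂ) aL • L (Umat n ζ)ᴴ x + L M' y) =
          ((starRingEnd ℂ) aL * (1 + ε)) • L (Matrix.diagonal (du * star dv)) x + ε • T y := by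
        simp only [hL, hU, hVH, map_add, _root_.map_smul, toEuclideanLin_diagonal_comp, hT]
        rw [mul_comm (star dv) du]
        module
      rw [hG1, hG2]
      set A1 := T x + (aL * (1 + ε)) • L (Matrix.diagonal (du * dv)) y with hA1
      set A2 := ((starRingEnd ℂ) aL * (1 + ε)) • L (Matrix.diagonal (du * star dv)) x + ε • T y
        with hA2
      -- now the norm estimates
      have hdudv : ∀ i, ‖(du * dv) i‖ = 1 := by
        intro i; simp [norm_mul, hdu i, hdv i]
      have hdusv : ∀ i, ‖(du * star dv) i‖ = 1 := by
        intro i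
        have hst : ‖star (dv i)‖ = ‖dv i‖ := Complex.norm_conj (dv i)
        simp only [Pi.mul_apply, Pi.star_apply, norm_mul, hdu i, hst, hdv i, one_mul]
      have hTx : ‖T x‖ ≤ Kb n a' ξ' * ‖x‖ := ih a' γ' ξ' x
      have hTy : ‖T y‖ ≤ Kb n a' ξ' * ‖y‖ := ih a' γ' ξ' y
      have hby : ‖(aL * (1 + ε)) • L (Matrix.diagonal (du * dv)) y‖ =
          ‖aL‖ * ‖1 + ε‖ * ‖y‖ := by
        rw [hL, norm_smul_diag _ _ hdudv, norm_mul]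
      have hcx : ‖((starRingEnd ℂ) aL * (1 + ε)) • L (Matrix.diagonal (du * star dv)) x‖ =
          ‖aL‖ * ‖1 + ε‖ * ‖x‖ := by
        rw [hL, norm_smul_diag _ _ hdusv, norm_mul, Complex.norm_conj]
      set K := Kb n a' ξ' with hK
      set r := ‖1 + ε‖ * ‖aL‖ with hr
      have hKsucc : Kb (n + 1) a ξ = K + r := by
        rw [hK, Kb, Kb, Fin.sum_univ_castSucc]
      have hwsq : ‖w‖ ^ 2 = ‖x‖ ^ 2 + ‖y‖ ^ 2 := norm_sq_split w
      have habsε : ‖ε‖ = 1 := by rw [hε]; exact abs_exp_I_mul_real _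
      have hrc : ‖aL‖ * ‖1 + ε‖ = r := by rw [hr, mul_comm]
      have h1 : ‖A1‖ ≤ K * ‖x‖ + r * ‖y‖ := by
        refine (norm_add_le _ _).trans ?_
        rw [hby, hrc]
        exact add_le_add hTx le_rfl
      have h2 : ‖A2‖ ≤ r * ‖x‖ + K * ‖y‖ := by
        refine (norm_add_le _ _).trans ?_
        rw [hcx, hrc, norm_smul, habsε, one_mul]
        exact add_le_add le_rfl hTy
      have hg : ‖jn A1 A2‖ ^ 2 = ‖A1‖ ^ 2 + ‖A2‖ ^ 2 := norm_jn_sq _ _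
      rw [hKsucc]
      have hxn : 0 ≤ ‖x‖ := norm_nonneg _
      have hyn : 0 ≤ ‖y‖ := norm_nonneg _
      have hwn : 0 ≤ ‖w‖ := norm_nonneg _
      have hKn : 0 ≤ K := Kb_nonneg n a' ξ'
      have hrn : 0 ≤ r := by positivity
      have hGn : 0 ≤ ‖jn A1 A2‖ := norm_nonneg _
      have h1' : 0 ≤ ‖A1‖ := norm_nonneg _
      have h2' : 0 ≤ ‖A2‖ := norm_nonneg _
      exact arith_aux K r ‖x‖ ‖y‖ ‖w‖ ‖A1‖ ‖A2‖ ‖jn A1 A2‖ hKn hrn hGn h1' h2' hxn hyn hwn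
        hwsq h1 h2 hg
noncomputable def cb (n : ℕ) (a : Fin n → ℂ) (γ : Fin n → Fin n → ℝ) : ℝ :=
  (∑ j, ‖a j‖ ^ 2) -
    ∑ m, ‖a m‖ *
      ∑ j, (if j < m then
        ‖1 + Complex.exp (Complex.I * (γ j m : ℂ))‖ * ‖a j‖ else 0)

lemma cb_succ (n : ℕ) (a : Fin (n + 1) → ℂ) (γ : Fin (n + 1) → Fin (n + 1) → ℝ) :
    cb (n + 1) a γ = cb n (fun j => a j.castSucc) (fun j k => γ j.castSucc k.castSucc) +
      ‖a (Fin.last n)‖ ^ 2 -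
      ‖a (Fin.last n)‖ *
        Kb n (fun j => a j.castSucc) (fun j => γ j.castSucc (Fin.last n)) := by
  have h1 : ∀ m : Fin n, (Fin.last n < Fin.castSucc m) = False :=
    fun m => eq_false (not_lt.mpr (Fin.le_last _))
  have h2 : (Fin.last n < Fin.last n) = False := eq_false (lt_irrefl _)
  have h3 : ∀ j : Fin n, (Fin.castSucc j < Fin.last n) = True :=
    fun j => eq_true (Fin.castSucc_lt_last j)
  simp only [cb, Kb, Fin.sum_univ_castSucc, Fin.castSucc_lt_castSucc_iff, h1, h2, h3,
    if_true, if_false, add_zero]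
  ring

lemma arith_aux2 (c A K nx ny p q R : ℝ) (hA : 0 ≤ A) (hK : 0 ≤ K)
    (hp : c * nx ^ 2 ≤ p ^ 2) (hq : c * ny ^ 2 ≤ q ^ 2)
    (hR : -(A * K * (nx * ny)) ≤ R) :
    (c + A ^ 2 - A * K) * (nx ^ 2 + ny ^ 2) ≤
      p ^ 2 + q ^ 2 + (A * ny) ^ 2 + (A * nx) ^ 2 + 2 * R := by
  nlinarith [mul_nonneg (mul_nonneg hA hK) (sq_nonneg (nx - ny))]

open scoped InnerProductSpace in
lemma Mmat_bound (n : ℕ) (a : Fin n → ℂ) (γ : Fin n → Fin n → ℝ)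
    (v : EuclideanSpace ℂ (Fin (2 ^ n))) :
    cb n a γ * ‖v‖ ^ 2 ≤ ‖Matrix.toEuclideanLin (Mmat n a γ) v‖ ^ 2 := by
  induction n with
  | zero =>
      have : cb 0 a γ = 0 := by simp [cb]
      rw [this, zero_mul]
      positivity
  | succ n ih =>
      set a' : Fin n → ℂ := fun j => a j.castSucc with ha'
      set γ' : Fin n → Fin n → ℝ := fun j k => γ j.castSucc k.castSucc with hγ'
      set ζ : Fin n → ℝ := fun j => γ j.castSucc (Fin.last n) with hζ
      set aL : ℂ := a (Fin.last n) with haL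
      obtain ⟨dv, hdv, hV⟩ := Umat_diag n ζ
      set x := pL v with hx
      set y := pR v with hy
      set M' := Mmat n a' γ' with hM'
      have hMv : Matrix.toEuclideanLin (Mmat (n + 1) a γ) v =
          jn (Matrix.toEuclideanLin M' x + aL • Matrix.toEuclideanLin (Umat n ζ) y)
             ((starRingEnd ℂ) aL • Matrix.toEuclideanLin (Umat n ζ)ᴴ x + Matrix.toEuclideanLin M' y) := by
        rw [Mmat_succ, toEuclideanLin_block]
        simp only [_root_.map_smul]
        rfl
      set P := Matrix.toEuclideanLin M' x + aL • Matrix.toEuclideanLin (Umat n ζ) y with hP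
      set Q := (starRingEnd ℂ) aL • Matrix.toEuclideanLin (Umat n ζ)ᴴ x + Matrix.toEuclideanLin M' y with hQ
      have hnorm : ‖Matrix.toEuclideanLin (Mmat (n + 1) a γ) v‖ ^ 2 = ‖P‖ ^ 2 + ‖Q‖ ^ 2 := by
        rw [hMv]; exact norm_jn_sq _ _
      have hsym : ∀ u w : EuclideanSpace ℂ (Fin (2 ^ n)), ⟪Matrix.toEuclideanLin M' u, w⟫_ℂ = ⟪u, Matrix.toEuclideanLin M' w⟫_ℂ :=
        Matrix.isHermitian_iff_isSymmetric.mp (Mmat_herm n a' γ')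
      set Tv := Matrix.toEuclideanLin M' (Matrix.toEuclideanLin (Umat n ζ) y) + Matrix.toEuclideanLin (Umat n ζ) (Matrix.toEuclideanLin M' y) with hTv
      have hTb : ‖Tv‖ ≤ Kb n a' ζ * ‖y‖ := anticomm_bound n a' γ' ζ y
      have e2 : ⟪Matrix.toEuclideanLin M' x, aL • Matrix.toEuclideanLin (Umat n ζ) y⟫_ℂ = aL * ⟪x, Matrix.toEuclideanLin M' (Matrix.toEuclideanLin (Umat n ζ) y)⟫_ℂ := by
        rw [inner_smul_right, hsym]
      have e3 : ⟪(starRingEnd ℂ) aL • Matrix.toEuclideanLin (Umat n ζ)ᴴ x, Matrix.toEuclideanLin M' y⟫_ℂ =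
          aL * ⟪x, Matrix.toEuclideanLin (Umat n ζ) (Matrix.toEuclideanLin M' y)⟫_ℂ := by
        rw [inner_smul_left, Complex.conj_conj,
          Matrix.toEuclideanLin_conjTranspose_eq_adjoint, LinearMap.adjoint_inner_left]
      have ecross : ⟪Matrix.toEuclideanLin M' x, aL • Matrix.toEuclideanLin (Umat n ζ) y⟫_ℂ +
          ⟪(starRingEnd ℂ) aL • Matrix.toEuclideanLin (Umat n ζ)ᴴ x, Matrix.toEuclideanLin M' y⟫_ℂ = aL * ⟪x, Tv⟫_ℂ := by
        rw [e2, e3, hTv, inner_add_right, mul_add]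
      have hnV : ‖Matrix.toEuclideanLin (Umat n ζ) y‖ = ‖y‖ := by
        rw [hV]; exact norm_toEuclideanLin_diagonal dv hdv y
      have hdsv : ∀ i, ‖star dv i‖ = 1 := by
        intro i
        have hst : ‖star (dv i)‖ = ‖dv i‖ := Complex.norm_conj (dv i)
        simpa [hst] using hdv i
      have hnVH : ‖Matrix.toEuclideanLin (Umat n ζ)ᴴ x‖ = ‖x‖ := by
        rw [hV, Matrix.diagonal_conjTranspose]
        exact norm_toEuclideanLin_diagonal _ hdsv x
      have eP : ‖P‖ ^ 2 = ‖Matrix.toEuclideanLin M' x‖ ^ 2 + 2 * RCLike.re ⟪Matrix.toEuclideanLin M' x, aL • Matrix.toEuclideanLin (Umat n ζ) y⟫_ℂ +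
          (‖aL‖ * ‖y‖) ^ 2 := by
        rw [hP, norm_add_sq (𝕜 := ℂ), norm_smul, hnV]
      have eQ : ‖Q‖ ^ 2 = (‖aL‖ * ‖x‖) ^ 2 +
          2 * RCLike.re ⟪(starRingEnd ℂ) aL • Matrix.toEuclideanLin (Umat n ζ)ᴴ x, Matrix.toEuclideanLin M' y⟫_ℂ + ‖Matrix.toEuclideanLin M' y‖ ^ 2 := by
        rw [hQ, norm_add_sq (𝕜 := ℂ), norm_smul, hnVH, Complex.norm_conj]
      -- bound on the cross term
      have hcross : -(‖aL‖ * Kb n a' ζ * (‖x‖ * ‖y‖)) ≤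
          RCLike.re ⟪Matrix.toEuclideanLin M' x, aL • Matrix.toEuclideanLin (Umat n ζ) y⟫_ℂ +
          RCLike.re ⟪(starRingEnd ℂ) aL • Matrix.toEuclideanLin (Umat n ζ)ᴴ x, Matrix.toEuclideanLin M' y⟫_ℂ := by
        have : RCLike.re ⟪Matrix.toEuclideanLin M' x, aL • Matrix.toEuclideanLin (Umat n ζ) y⟫_ℂ +
            RCLike.re ⟪(starRingEnd ℂ) aL • Matrix.toEuclideanLin (Umat n ζ)ᴴ x, Matrix.toEuclideanLin M' y⟫_ℂ =
            RCLike.re (aL * ⟪x, Tv⟫_ℂ) := by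
          rw [← map_add, ecross]
        rw [this]
        have hrec : RCLike.re (aL * ⟪x, Tv⟫_ℂ) = (aL * ⟪x, Tv⟫_ℂ).re := rfl
        rw [hrec]
        have habs : |(aL * ⟪x, Tv⟫_ℂ).re| ≤ ‖aL‖ * Kb n a' ζ * (‖x‖ * ‖y‖) := by
          have l1 : |(aL * ⟪x, Tv⟫_ℂ).re| ≤ ‖aL * ⟪x, Tv⟫_ℂ‖ :=
            Complex.abs_re_le_norm _
          have l2 : ‖aL * ⟪x, Tv⟫_ℂ‖ = ‖aL‖ * ‖⟪x, Tv⟫_ℂ‖ := by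
            rw [norm_mul]
          have l3 : ‖⟪x, Tv⟫_ℂ‖ ≤ ‖x‖ * ‖Tv‖ := norm_inner_le_norm _ _
          have l4 : ‖x‖ * ‖Tv‖ ≤ ‖x‖ * (Kb n a' ζ * ‖y‖) :=
            mul_le_mul_of_nonneg_left hTb (norm_nonneg _)
          calc |(aL * ⟪x, Tv⟫_ℂ).re| ≤ ‖aL‖ * ‖⟪x, Tv⟫_ℂ‖ := l2 ▸ l1
            _ ≤ ‖aL‖ * (‖x‖ * (Kb n a' ζ * ‖y‖)) := by
                refine mul_le_mul_of_nonneg_left (l3.trans l4) ?_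
                positivity
            _ = ‖aL‖ * Kb n a' ζ * (‖x‖ * ‖y‖) := by ring
        linarith [(abs_le.mp habs).1]
      have hvsq : ‖v‖ ^ 2 = ‖x‖ ^ 2 + ‖y‖ ^ 2 := norm_sq_split v
      have hpx : cb n a' γ' * ‖x‖ ^ 2 ≤ ‖Matrix.toEuclideanLin M' x‖ ^ 2 := ih a' γ' x
      have hqy : cb n a' γ' * ‖y‖ ^ 2 ≤ ‖Matrix.toEuclideanLin M' y‖ ^ 2 := ih a' γ' y
      rw [cb_succ, hnorm, eP, eQ, hvsq]
      have harith := arith_aux2 (cb n a' γ') (‖aL‖) (Kb n a' ζ) ‖x‖ ‖y‖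
        ‖Matrix.toEuclideanLin M' x‖ ‖Matrix.toEuclideanLin M' y‖
        (RCLike.re ⟪Matrix.toEuclideanLin M' x, aL • Matrix.toEuclideanLin (Umat n ζ) y⟫_ℂ +
          RCLike.re ⟪(starRingEnd ℂ) aL • Matrix.toEuclideanLin (Umat n ζ)ᴴ x, Matrix.toEuclideanLin M' y⟫_ℂ)
        (norm_nonneg _) (Kb_nonneg n a' ζ) hpx hqy hcross
      calc (cb n a' γ' + ‖aL‖ ^ 2 - ‖aL‖ * Kb n a' ζ) * (‖x‖ ^ 2 + ‖y‖ ^ 2) ≤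
          ‖Matrix.toEuclideanLin M' x‖ ^ 2 + ‖Matrix.toEuclideanLin M' y‖ ^ 2 + (‖aL‖ * ‖y‖) ^ 2 + (‖aL‖ * ‖x‖) ^ 2 +
            2 * (RCLike.re ⟪Matrix.toEuclideanLin M' x, aL • Matrix.toEuclideanLin (Umat n ζ) y⟫_ℂ +
              RCLike.re ⟪(starRingEnd ℂ) aL • Matrix.toEuclideanLin (Umat n ζ)ᴴ x, Matrix.toEuclideanLin M' y⟫_ℂ) := harith
        _ = ‖Matrix.toEuclideanLin M' x‖ ^ 2 + 2 * RCLike.re ⟪Matrix.toEuclideanLin M' x, aL • Matrix.toEuclideanLin (Umat n ζ) y⟫_ℂ +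
              (‖aL‖ * ‖y‖) ^ 2 + ((‖aL‖ * ‖x‖) ^ 2 +
              2 * RCLike.re ⟪(starRingEnd ℂ) aL • Matrix.toEuclideanLin (Umat n ζ)ᴴ x, Matrix.toEuclideanLin M' y⟫_ℂ +
              ‖Matrix.toEuclideanLin M' y‖ ^ 2) := by ring
end MmatProof

/-- Lemma 2.2 (4), first form: a lower bound on
`inf_{‖v‖=1} ‖M_n((a_j),(γ_{j,k})) v‖²`. -/
theorem Mmat_inf_sq_ge (n : ℕ) (hn : 1 ≤ n) (a : Fin n → ℂ) (γ : Fin n → Fin n → ℝ) :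
    (∑ j : Fin n, ‖a j‖ ^ 2) -
        (if 2 ≤ n then (1 : ℝ) else 0) *
          ∑ m : Fin n, ‖a m‖ *
            ∑ j : Fin n,
              (if j < m then
                ‖1 + Complex.exp (Complex.I * (γ j m : ℂ))‖ * ‖a j‖
              else 0) ≤
      sInf {r : ℝ | ∃ v : EuclideanSpace ℂ (Fin (2 ^ n)),
        ‖v‖ = 1 ∧ r = ‖Matrix.toEuclideanLin (Mmat n a γ) v‖ ^ 2} := by
  classical
  set v0 : EuclideanSpace ℂ (Fin (2 ^ n)) :=
    EuclideanSpace.single (⟨0, pow_pos (by norm_num) n⟩ : Fin (2 ^ n)) (1 : ℂ) with hv0def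
  have hv0 : ‖v0‖ = 1 := by
    rw [hv0def, EuclideanSpace.norm_single, norm_one]
  have hne : {r : ℝ | ∃ v : EuclideanSpace ℂ (Fin (2 ^ n)),
      ‖v‖ = 1 ∧ r = ‖Matrix.toEuclideanLin (Mmat n a γ) v‖ ^ 2}.Nonempty :=
    ⟨_, v0, hv0, rfl⟩
  have hkey : MmatProof.cb n a γ ≤ sInf {r : ℝ | ∃ v : EuclideanSpace ℂ (Fin (2 ^ n)),
      ‖v‖ = 1 ∧ r = ‖Matrix.toEuclideanLin (Mmat n a γ) v‖ ^ 2} := by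
    refine le_csInf hne ?_
    rintro r ⟨v, hv, rfl⟩
    have h := MmatProof.Mmat_bound n a γ v
    rw [hv] at h
    simpa using h
  by_cases h2 : 2 ≤ n
  · rw [if_pos h2, one_mul]
    exact hkey
  · have hn1 : n = 1 := by omega
    subst hn1
    rw [if_neg h2, zero_mul, sub_zero]
    have hcb : MmatProof.cb 1 a γ = ∑ j : Fin 1, ‖a j‖ ^ 2 := by
      simp [MmatProof.cb]
    rw [← hcb]
    exact hkey
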